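/- Let A be the n×n matrix with ones on the superdiagonal and zeros elsewhere, and let E_{rs} = e_r e_s^T. Define H_{rs}^{(k)} = Σ_{p+q=k} A^p E_{rs} A^q. Then for every k with 0 ≤ k ≤ n-1, max over 1 ≤ r,s ≤ n of 1^T H_{rs}^{(k)} 1 equals k+1, and this maximum is attained at r = n, s = 1. -/

import Mathlib

/-- The n×n adjacency matrix of the directed path: ones on the superdiagonal. -/
def pathAdj (n : ℕ) : Matrix (Fin n) (Fin n) ℝ :=
  Matrix.of fun i j => if (i : ℕ) + 1 = (j : ℕ) then 1 else 0

/-- `H_{rs}^{(k)} = Σ_{p+q=k} A^p (e_r e_sᵀ) A^q`. -/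
def Hmat (n : ℕ) (r s : Fin n) (k : ℕ) : Matrix (Fin n) (Fin n) ℝ :=
  ∑ p ∈ Finset.range (k + 1),
    (pathAdj n) ^ p * Matrix.single r s (1 : ℝ) * (pathAdj n) ^ (k - p)

/-- `1ᵀ M 1`, the sum of all entries of a matrix. -/
def totSum {n : ℕ} (M : Matrix (Fin n) (Fin n) ℝ) : ℝ := ∑ i, ∑ j, M i j

lemma pathAdj_apply (n : ℕ) (i j : Fin n) :
    pathAdj n i j = if (i : ℕ) + 1 = (j : ℕ) then 1 else 0 := rfl

lemma pathAdj_pow (n p : ℕ) (i j : Fin n) :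
    ((pathAdj n) ^ p) i j = if (i : ℕ) + p = (j : ℕ) then 1 else 0 := by
  induction p generalizing j with
  | zero => simp [Matrix.one_apply, Fin.ext_iff, eq_comm]
  | succ p ih =>
    rw [pow_succ, Matrix.mul_apply]
    simp only [ih, pathAdj_apply]
    by_cases h : (i : ℕ) + (p + 1) = (j : ℕ)
    · rw [if_pos h, Finset.sum_eq_single (⟨(i : ℕ) + p, by omega⟩ : Fin n)]
      · have h2 : (i : ℕ) + p + 1 = (j : ℕ) := by omega
        simp [h2]
      · intro b _ hb
        simp only [ite_mul, one_mul, zero_mul, ite_eq_right_iff]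
        intro h1 h2
        exact absurd (Fin.ext (h1.symm : (b : ℕ) = (i : ℕ) + p)) hb
      · intro hmem; exact absurd (Finset.mem_univ _) hmem
    · rw [if_neg h, Finset.sum_eq_zero]
      intro b _
      simp only [ite_mul, one_mul, zero_mul, ite_eq_right_iff]
      intro h1 h2; omega

lemma Hterm_entry (n p q : ℕ) (r s i j : Fin n) :
    ((pathAdj n) ^ p * Matrix.single r s (1 : ℝ) * (pathAdj n) ^ q) i j
      = ((pathAdj n) ^ p) i r * ((pathAdj n) ^ q) s j := by
  rw [Matrix.mul_assoc, Matrix.mul_apply, Finset.sum_eq_single r]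
  · rw [Matrix.single_mul_apply_same, one_mul]
  · intro b _ hb
    rw [Matrix.single_mul_apply_of_ne _ _ _ _ _ hb, mul_zero]
  · intro hmem; exact absurd (Finset.mem_univ _) hmem

lemma colsum (n p : ℕ) (r : Fin n) :
    ∑ i : Fin n, ((pathAdj n) ^ p) i r = if p ≤ (r : ℕ) then 1 else 0 := by
  simp only [pathAdj_pow]
  by_cases h : p ≤ (r : ℕ)
  · rw [if_pos h, Finset.sum_eq_single (⟨(r : ℕ) - p, by omega⟩ : Fin n)]
    · rw [if_pos (by simp; omega)]
    · intro b _ hb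
      rw [if_neg]
      intro hc
      exact hb (Fin.ext (by simp; omega))
    · intro hmem; exact absurd (Finset.mem_univ _) hmem
  · rw [if_neg h, Finset.sum_eq_zero]
    intro b _
    rw [if_neg]
    omega

lemma rowsum (n q : ℕ) (s : Fin n) :
    ∑ j : Fin n, ((pathAdj n) ^ q) s j = if (s : ℕ) + q < n then 1 else 0 := by
  simp only [pathAdj_pow]
  by_cases h : (s : ℕ) + q < n
  · rw [if_pos h, Finset.sum_eq_single (⟨(s : ℕ) + q, h⟩ : Fin n)]
    · rw [if_pos (by simp)]
    · intro b _ hb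
      rw [if_neg]
      intro hc
      exact hb (Fin.ext (by simp; omega))
    · intro hmem; exact absurd (Finset.mem_univ _) hmem
  · rw [if_neg h, Finset.sum_eq_zero]
    intro b _
    rw [if_neg]
    intro hc
    omega

lemma totSum_sum {n : ℕ} {ι : Type*} (F : Finset ι) (M : ι → Matrix (Fin n) (Fin n) ℝ) :
    totSum (∑ p ∈ F, M p) = ∑ p ∈ F, totSum (M p) := by
  simp only [totSum, Matrix.sum_apply]
  calc ∑ i, ∑ j, ∑ p ∈ F, M p i j
      = ∑ i, ∑ p ∈ F, ∑ j, M p i j := Finset.sum_congr rfl fun i _ => Finset.sum_comm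
    _ = ∑ p ∈ F, ∑ i, ∑ j, M p i j := Finset.sum_comm

lemma totSum_Hmat (n k : ℕ) (r s : Fin n) :
    totSum (Hmat n r s k) = ∑ p ∈ Finset.range (k + 1),
      (if p ≤ (r : ℕ) then (1 : ℝ) else 0) * (if (s : ℕ) + (k - p) < n then 1 else 0) := by
  rw [Hmat, totSum_sum]
  refine Finset.sum_congr rfl fun p _ => ?_
  simp only [totSum, Hterm_entry, ← Finset.mul_sum, ← Finset.sum_mul]
  rw [colsum, rowsum]

/-- for `0 ≤ k ≤ n-1`, the maximum over all `r, s` of `1ᵀ H_{rs}^{(k)} 1`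
equals `k+1`, attained at `r = n`, `s = 1` (indices `n-1` and `0` in 0-based indexing). -/
theorem totSum_Hmat_max (n k : ℕ) (hn : 0 < n) (hk : k ≤ n - 1) :
    (∀ r s : Fin n, totSum (Hmat n r s k) ≤ (k : ℝ) + 1) ∧
    totSum (Hmat n (⟨n - 1, by omega⟩ : Fin n) (⟨0, hn⟩ : Fin n) k) = (k : ℝ) + 1 := by
  constructor
  · intro r s
    rw [totSum_Hmat]
    calc ∑ p ∈ Finset.range (k + 1),
        (if p ≤ (r : ℕ) then (1 : ℝ) else 0) * (if (s : ℕ) + (k - p) < n then 1 else 0)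
        ≤ ∑ p ∈ Finset.range (k + 1), 1 := by
          apply Finset.sum_le_sum
          intro p _
          split <;> split <;> norm_num
      _ = (k : ℝ) + 1 := by simp
  · rw [totSum_Hmat]
    have : ∀ p ∈ Finset.range (k + 1),
        (if p ≤ ((⟨n - 1, by omega⟩ : Fin n) : ℕ) then (1 : ℝ) else 0) *
          (if ((⟨0, hn⟩ : Fin n) : ℕ) + (k - p) < n then 1 else 0) = 1 := by
      intro p hp
      simp only [Finset.mem_range] at hp
      rw [if_pos (by simp; omega), if_pos (by simp; omega), one_mul]
    rw [Finset.sum_congr rfl this]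
    simp
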